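/- For any t ∈ [0,1], the convexity of H_Φ : Z ↦ E Φ(Z) − Φ(E Z) over random variables is equivalent to the joint convexity of the map (u,v) ↦ t·Φ(u) + (1−t)·Φ(v) − Φ(t·u + (1−t)·v) for all t ∈ [0,1]. -/

import Mathlib

open MeasureTheory Set

/-- The classical `Φ`-entropy `H_Φ(Z) = E Φ(Z) − Φ(E Z)` of a real random variable. -/
noncomputable def entPhi {Ω : Type} [MeasurableSpace Ω] (μ : Measure Ω) (Φ : ℝ → ℝ)
    (Z : Ω → ℝ) : ℝ :=
  (∫ ω, Φ (Z ω) ∂μ) - Φ (∫ ω, Z ω ∂μ)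

/-- For `Φ : [0,∞) → ℝ` continuous and convex, convexity of the `Φ`-entropy functional
`H_Φ : Z ↦ E Φ(Z) − Φ(E Z)` over nonnegative random variables (on arbitrary probability
spaces) is equivalent to the joint convexity, for every `t ∈ [0,1]`, of the map
`(u,v) ↦ t·Φ(u) + (1−t)·Φ(v) − Φ(t·u + (1−t)·v)` on `[0,∞) × [0,∞)`. -/
theorem entPhi_convex_iff_jointly_convex (Φ : ℝ → ℝ)
    (hΦcont : ContinuousOn Φ (Ici 0)) (hΦconv : ConvexOn ℝ (Ici 0) Φ) :
    (∀ (Ω : Type) (_ : MeasurableSpace Ω) (μ : Measure Ω), IsProbabilityMeasure μ →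
      ∀ (X Y : Ω → ℝ), Measurable X → Measurable Y →
        (∀ ω, 0 ≤ X ω) → (∀ ω, 0 ≤ Y ω) →
        Integrable X μ → Integrable Y μ →
        Integrable (fun ω => Φ (X ω)) μ → Integrable (fun ω => Φ (Y ω)) μ →
        ∀ t ∈ Icc (0 : ℝ) 1,
          Integrable (fun ω => Φ (t * X ω + (1 - t) * Y ω)) μ →
          entPhi μ Φ (fun ω => t * X ω + (1 - t) * Y ω) ≤
            t * entPhi μ Φ X + (1 - t) * entPhi μ Φ Y) ↔
      (∀ t ∈ Icc (0 : ℝ) 1,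
        ConvexOn ℝ ((Ici (0 : ℝ)) ×ˢ (Ici (0 : ℝ)))
          (fun p => t * Φ p.1 + (1 - t) * Φ p.2 - Φ (t * p.1 + (1 - t) * p.2))) := by
  constructor
  · -- Forward direction: test on two-point probability spaces.
    intro h t ht
    obtain ⟨ht0, ht1⟩ := ht
    refine ⟨(convex_Ici (0:ℝ)).prod (convex_Ici 0), ?_⟩
    rintro ⟨u₁, v₁⟩ ⟨hu₁, hv₁⟩ ⟨u₂, v₂⟩ ⟨hu₂, hv₂⟩ a b ha hb hab
    set μ : Measure Bool := ENNReal.ofReal a • Measure.dirac true +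
      ENNReal.ofReal b • Measure.dirac false with hμdef
    have hfin1 : IsFiniteMeasure (ENNReal.ofReal a • (Measure.dirac (true : Bool))) :=
      ⟨by simp [lt_top_iff_ne_top]⟩
    have hfin2 : IsFiniteMeasure (ENNReal.ofReal b • (Measure.dirac (false : Bool))) :=
      ⟨by simp [lt_top_iff_ne_top]⟩
    have hprob : IsProbabilityMeasure μ := by
      constructor
      simp [hμdef, ← ENNReal.ofReal_add ha hb, hab]
    have key : ∀ f : Bool → ℝ, ∫ ω, f ω ∂μ = a * f true + b * f false := by
      intro f
      rw [hμdef, integral_add_measure Integrable.of_finite Integrable.of_finite,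
        integral_smul_measure, integral_smul_measure, integral_dirac, integral_dirac,
        ENNReal.toReal_ofReal ha, ENNReal.toReal_ofReal hb]
      simp [smul_eq_mul]
    set X : Bool → ℝ := fun ω => if ω then u₁ else u₂ with hX
    set Y : Bool → ℝ := fun ω => if ω then v₁ else v₂ with hY
    have hX0 : ∀ ω, 0 ≤ X ω := by intro ω; cases ω <;> simpa [hX]
    have hY0 : ∀ ω, 0 ≤ Y ω := by intro ω; cases ω <;> simpa [hY]
    have hmain := h Bool _ μ hprob X Y (measurable_of_finite X) (measurable_of_finite Y)
      hX0 hY0 Integrable.of_finite Integrable.of_finite Integrable.of_finite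
      Integrable.of_finite t ⟨ht0, ht1⟩ Integrable.of_finite
    have eX : entPhi μ Φ X = a * Φ u₁ + b * Φ u₂ - Φ (a * u₁ + b * u₂) := by
      simp only [entPhi, key (fun ω => Φ (X ω)), key X, hX]
      rw [key, key]
      norm_num
    have eY : entPhi μ Φ Y = a * Φ v₁ + b * Φ v₂ - Φ (a * v₁ + b * v₂) := by
      simp only [entPhi, key (fun ω => Φ (Y ω)), key Y, hY]
      rw [key, key]
      norm_num
    have eC : entPhi μ Φ (fun ω => t * X ω + (1 - t) * Y ω) =
        a * Φ (t * u₁ + (1 - t) * v₁) + b * Φ (t * u₂ + (1 - t) * v₂) -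
          Φ (a * (t * u₁ + (1 - t) * v₁) + b * (t * u₂ + (1 - t) * v₂)) := by
      simp only [entPhi, key (fun ω => Φ (t * X ω + (1 - t) * Y ω)),
        key (fun ω => t * X ω + (1 - t) * Y ω), hX, hY]
      rw [key, key]
      norm_num
    rw [eX, eY, eC] at hmain
    show t * Φ (a * u₁ + b * u₂) + (1 - t) * Φ (a * v₁ + b * v₂) -
        Φ (t * (a * u₁ + b * u₂) + (1 - t) * (a * v₁ + b * v₂)) ≤
        a * (t * Φ u₁ + (1 - t) * Φ v₁ - Φ (t * u₁ + (1 - t) * v₁)) +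
        b * (t * Φ u₂ + (1 - t) * Φ v₂ - Φ (t * u₂ + (1 - t) * v₂))
    have harg : t * (a * u₁ + b * u₂) + (1 - t) * (a * v₁ + b * v₂) =
        a * (t * u₁ + (1 - t) * v₁) + b * (t * u₂ + (1 - t) * v₂) := by ring
    rw [harg]
    linarith
  · -- Reverse direction: Jensen's inequality applied to the jointly convex map.
    intro h Ω mΩ μ hμ X Y hXm hYm hX0 hY0 hXi hYi hΦX hΦY t ht hΦc
    obtain ⟨ht0, ht1⟩ := ht
    have ht1' : (0:ℝ) ≤ 1 - t := by linarith
    have hconv := h t ⟨ht0, ht1⟩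
    set s : Set (ℝ × ℝ) := (Ici (0:ℝ)) ×ˢ (Ici (0:ℝ)) with hs
    have hgc : ContinuousOn
        (fun p : ℝ × ℝ => t * Φ p.1 + (1 - t) * Φ p.2 - Φ (t * p.1 + (1 - t) * p.2)) s := by
      refine ContinuousOn.sub (ContinuousOn.add ?_ ?_) ?_
      · exact continuousOn_const.mul (hΦcont.comp continuousOn_fst fun p hp => hp.1)
      · exact continuousOn_const.mul (hΦcont.comp continuousOn_snd fun p hp => hp.2)
      · refine hΦcont.comp (Continuous.continuousOn (by continuity)) fun p hp => ?_
        exact add_nonneg (mul_nonneg ht0 hp.1) (mul_nonneg ht1' hp.2)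
    have hclosed : IsClosed s := isClosed_Ici.prod isClosed_Ici
    have hfs : ∀ᵐ ω ∂μ, (X ω, Y ω) ∈ s := ae_of_all μ fun ω => ⟨hX0 ω, hY0 ω⟩
    have hfi : Integrable (fun ω => (X ω, Y ω)) μ := hXi.prodMk hYi
    have hgi : Integrable ((fun p : ℝ × ℝ =>
        t * Φ p.1 + (1 - t) * Φ p.2 - Φ (t * p.1 + (1 - t) * p.2)) ∘ fun ω => (X ω, Y ω)) μ := by
      exact ((hΦX.const_mul t).add (hΦY.const_mul (1 - t))).sub hΦc
    have jensen := hconv.map_integral_le hgc hclosed hfs hfi hgi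
    rw [integral_pair hXi hYi] at jensen
    have hint1 : ∫ ω, (t * Φ (X ω) + (1 - t) * Φ (Y ω) - Φ (t * X ω + (1 - t) * Y ω)) ∂μ =
        t * (∫ ω, Φ (X ω) ∂μ) + (1 - t) * (∫ ω, Φ (Y ω) ∂μ) -
          ∫ ω, Φ (t * X ω + (1 - t) * Y ω) ∂μ := by
      have h1 : Integrable (fun ω => t * Φ (X ω) + (1 - t) * Φ (Y ω)) μ :=
        (hΦX.const_mul t).add (hΦY.const_mul (1 - t))
      have h2 : Integrable (fun ω => t * Φ (X ω)) μ := hΦX.const_mul t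
      have h3 : Integrable (fun ω => (1 - t) * Φ (Y ω)) μ := hΦY.const_mul (1 - t)
      rw [integral_sub h1 hΦc, integral_add h2 h3, integral_const_mul, integral_const_mul]
    have hint2 : ∫ ω, (t * X ω + (1 - t) * Y ω) ∂μ =
        t * (∫ ω, X ω ∂μ) + (1 - t) * (∫ ω, Y ω ∂μ) := by
      have h2 : Integrable (fun ω => t * X ω) μ := hXi.const_mul t
      have h3 : Integrable (fun ω => (1 - t) * Y ω) μ := hYi.const_mul (1 - t)
      rw [integral_add h2 h3, integral_const_mul, integral_const_mul]
    simp only at jensen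
    rw [hint1] at jensen
    simp only [entPhi, hint2]
    linarith
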